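/- A permutation π ∈ Av_n(123) with n ≥ 3 has an increasing sub-permutation of size 2 if and only if the first three entries of π form the pattern 231 (i.e., π₁ < π₂, π₃ < π₁). -/

import Mathlib

/-- Rescaling: replace each entry of a duplicate-free list by its rank, giving a
permutation of `{1,...,length}` with the same relative order. -/
def rescale (s : List ℕ) : List ℕ :=
  s.map (fun x => (s.filter (fun y => decide (y ≤ x))).length)

/-- `l` is (the one-line notation of) a permutation of `{1,...,n}`. -/
def IsPermList (n : ℕ) (l : List ℕ) : Prop := l.Perm (List.range' 1 n)

/-- `l` contains the pattern `σ`: some subsequence of `l` is order-isomorphic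
to `σ`. -/
def ContainsPat (σ l : List ℕ) : Prop := ∃ t, t.Sublist l ∧ rescale t = σ

/-- `l` avoids the pattern `σ`. -/
def AvoidsPat (σ l : List ℕ) : Prop := ¬ ContainsPat σ l

/-- `s` is the substring `s_l(k)` of `l` generated by the entry `k`: the longest
contiguous substring of `l` containing `k` all of whose entries are `≥ k`.
The sub-permutation `g_l(k)` generated by `k` is then `rescale s`. -/
def IsGenSub (l : List ℕ) (k : ℕ) (s : List ℕ) : Prop :=
  s <:+: l ∧ k ∈ s ∧ (∀ x ∈ s, k ≤ x) ∧
    ∀ t : List ℕ, t <:+: l → k ∈ t → (∀ x ∈ t, k ≤ x) → t.length ≤ s.length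

lemma rescale_sorted_triple {a b c : ℕ} (h1 : a < b) (h2 : b < c) :
    rescale [a, b, c] = [1, 2, 3] := by
  simp [rescale, List.filter, h1.le, h2.le, (h1.trans h2).le, not_le.2 h1, not_le.2 h2,
    not_le.2 (h1.trans h2)]

/-- A permutation `π ∈ Av_n(123)` with `n ≥ 3` has an increasing
sub-permutation of size `2` if and only if its first three entries form the
pattern `231`, i.e. `π₃ < π₁ < π₂`. -/
theorem av123_increasing_iff_231_start (n : ℕ) (hn : 3 ≤ n) (l : List ℕ)
    (hl : IsPermList n l) (hav : AvoidsPat [1, 2, 3] l) :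
    (∃ k s, IsGenSub l k s ∧ s.length = 2 ∧ s.Chain' (· < ·)) ↔
      (l.getD 2 0 < l.getD 0 0 ∧ l.getD 0 0 < l.getD 1 0) := by
  have hlen : l.length = n := by simpa using hl.length_eq
  have hnd : l.Nodup := hl.nodup_iff.mpr (List.nodup_range' ..)
  constructor
  · rintro ⟨k, s, ⟨hinf, hk, hge, hmax⟩, hs2, hch⟩
    obtain ⟨a, b, rfl⟩ : ∃ a b, s = [a, b] := by
      match s, hs2 with
      | [a, b], _ => exact ⟨a, b, rfl⟩
    have hab : a < b := by simpa [List.Chain'] using hch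
    have hka : k = a := by
      rcases (by simpa using hk : k = a ∨ k = b) with h | h
      · exact h
      · have := hge a (by simp)
        omega
    subst hka
    obtain ⟨p, q, hpq⟩ := hinf
    rcases p.eq_nil_or_concat with rfl | ⟨p', x, rfl⟩
    · -- s is a prefix of l
      simp only [List.nil_append] at hpq
      rcases q with _ | ⟨c, q'⟩
      · exfalso
        rw [← hpq] at hlen
        simp at hlen
        omega
      · have hca : c < k := by
          by_contra h
          push_neg at h
          have := hmax [k, b, c] ⟨[], q', by simpa using hpq⟩ (by simp)
            (by intro x hx; simp at hx; rcases hx with rfl | rfl | rfl <;> omega)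
          simp at this
        rw [← hpq]
        simpa using ⟨hca, hab⟩
    · -- s has an entry x just to its left
      exfalso
      rcases lt_or_ge x k with hxk | hkx
      · exact hav ⟨[x, k, b], (show [x,k,b] <:+: l from
          ⟨p', q, by rw [← hpq]; simp⟩).sublist, rescale_sorted_triple hxk hab⟩
      · have := hmax [x, k, b] ⟨p', q, by rw [← hpq]; simp⟩ (by simp)
          (by intro y hy; simp at hy; rcases hy with rfl | rfl | rfl <;> omega)
        simp at this
  · rintro ⟨h1, h2⟩
    have h3 : 3 ≤ l.length := by omega
    obtain ⟨a, b, c, rest, rfl⟩ : ∃ a b c rest, l = a :: b :: c :: rest := by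
      rcases l with _ | ⟨a, _ | ⟨b, _ | ⟨c, rest⟩⟩⟩ <;> simp at h3 <;>
        first | omega | exact ⟨a, b, c, rest, rfl⟩
    replace h1 : c < a := h1
    replace h2 : a < b := h2
    refine ⟨a, [a, b], ⟨⟨[], c :: rest, by simp⟩, by simp,
      by intro x hx; simp at hx; rcases hx with rfl | rfl <;> omega, ?_⟩, rfl, by simpa [List.Chain'] using h2⟩
    intro t ht hat hget
    by_contra hlen3
    push_neg at hlen3
    obtain ⟨p, q, hpq⟩ := ht
    rcases p with _ | ⟨y, p'⟩
    · -- t is a prefix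
      simp only [List.nil_append] at hpq
      rcases t with _ | ⟨t0, _ | ⟨t1, _ | ⟨t2, t'⟩⟩⟩ <;> simp at hlen3
      simp only [List.cons_append, List.cons.injEq] at hpq
      obtain ⟨rfl, rfl, rfl, -⟩ := hpq
      have := hget t2 (by simp)
      omega
    · -- t starts later; then a would appear twice
      simp only [List.cons_append, List.cons.injEq] at hpq
      obtain ⟨hy, htl⟩ := hpq
      have hmem : a ∈ p' ++ t ++ q := by simp [hat]
      rw [htl] at hmem
      simp only [List.nodup_cons] at hnd
      exact hnd.1 hmem
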